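/- arXiv:2202.10369 — 2 statements merged into one kernel-verified Lean document; each statement's English description precedes it below -/
import Mathlib

section
/- Let 0 = x₁ < x₂ < ⋯ < x_{2n+1} = 2π and let φ_m : [0,2π] → ℝ be continuous nonnegative functions with {φ_m > 0} = (x_m, x_{m+1}) for m = 1,…,2n, and let α ∈ ℝ. Then the 2n×2n complex matrix A with entries A_{km} = (1/2π) ∫₀^{2π} e^{-(ik+α)x} φ_m(x) dx, rows indexed by k = −n+1,…,n, is invertible. -/
open Complex Real MeasureTheory

lemma exp_diff_eq' (a b : ℂ) :
    Complex.exp (-Complex.I * b) - Complex.exp (-Complex.I * a)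
      = -2 * Complex.I * Complex.sin ((b - a) / 2)
        * Complex.exp (-Complex.I * ((a + b) / 2)) := by
  rw [Complex.sin]
  have h : -2 * Complex.I *
      ((Complex.exp (-((b - a) / 2) * Complex.I) - Complex.exp (((b - a) / 2) * Complex.I))
        * Complex.I / 2) * Complex.exp (-Complex.I * ((a + b) / 2))
      = (Complex.exp (-((b - a) / 2) * Complex.I) * Complex.exp (-Complex.I * ((a + b) / 2))
          - Complex.exp (((b - a) / 2) * Complex.I) * Complex.exp (-Complex.I * ((a + b) / 2)))
        * (-(Complex.I * Complex.I)) := by ring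
  rw [h, Complex.I_mul_I, ← Complex.exp_add, ← Complex.exp_add]
  norm_num
  have e1 : -((b - a) / 2 * Complex.I) + -(Complex.I * ((a + b) / 2)) = -(Complex.I * b) := by ring
  have e2 : (b - a) / 2 * Complex.I + -(Complex.I * ((a + b) / 2)) = -(Complex.I * a) := by ring
  rw [e1, e2]

lemma telescope_sum (K : ℕ) (x : Fin (K + 1) → ℝ) :
    ∑ m : Fin K, (x m.succ - x m.castSucc) = x (Fin.last K) - x 0 := by
  induction K with
  | zero => simp
  | succ K ih =>
      rw [Fin.sum_univ_castSucc]
      have h1 : ∀ m : Fin K, (m.castSucc).succ = (m.succ).castSucc := by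
        intro m; exact (Fin.succ_castSucc m).symm ▸ rfl
      have h2 : ∑ m : Fin K, (x m.castSucc.succ - x m.castSucc.castSucc)
          = (x ∘ Fin.castSucc) (Fin.last K) - (x ∘ Fin.castSucc) 0 := by
        rw [← ih (x ∘ Fin.castSucc)]
        refine Finset.sum_congr rfl fun m _ => ?_
        simp [Function.comp, Fin.succ_castSucc, -Fin.castSucc_succ]
      rw [h2]
      simp only [Function.comp]
      have h3 : (Fin.last K).succ = Fin.last (K + 1) := rfl
      have h4 : (Fin.castSucc (0 : Fin (K+1))) = (0 : Fin (K+2)) := rfl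
      rw [h3, h4]
      ring

lemma pair_sum (K : ℕ) (y : Fin K → ℝ) :
    ∑ i : Fin K, ∑ j ∈ Finset.Ioi i, (y i + y j) = ((K : ℝ) - 1) * ∑ m, y m := by
  rcases Nat.eq_zero_or_pos K with hK | hK
  · subst hK; simp
  have swap : ∑ i : Fin K, ∑ j ∈ Finset.Ioi i, y j
      = ∑ j : Fin K, ∑ _i ∈ Finset.Iio j, y j := by
    refine Finset.sum_comm' ?_
    intro i j
    simp [Finset.mem_Ioi, Finset.mem_Iio]
  calc ∑ i : Fin K, ∑ j ∈ Finset.Ioi i, (y i + y j)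
      = ∑ i : Fin K, (((Finset.Ioi i).card : ℝ) * y i + ∑ j ∈ Finset.Ioi i, y j) := by
        refine Finset.sum_congr rfl fun i _ => ?_
        rw [Finset.sum_add_distrib, Finset.sum_const, nsmul_eq_mul]
    _ = ∑ i : Fin K, ((Finset.Ioi i).card : ℝ) * y i + ∑ i : Fin K, ∑ j ∈ Finset.Ioi i, y j :=
        Finset.sum_add_distrib
    _ = ∑ i : Fin K, ((Finset.Ioi i).card : ℝ) * y i
        + ∑ j : Fin K, ((Finset.Iio j).card : ℝ) * y j := by
        rw [swap]; congr 1
        refine Finset.sum_congr rfl fun j _ => ?_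
        rw [Finset.sum_const, nsmul_eq_mul]
    _ = ∑ i : Fin K, (((Finset.Ioi i).card : ℝ) + ((Finset.Iio i).card : ℝ)) * y i := by
        rw [← Finset.sum_add_distrib]
        refine Finset.sum_congr rfl fun i _ => ?_
        ring
    _ = ∑ i : Fin K, ((K : ℝ) - 1) * y i := by
        refine Finset.sum_congr rfl fun i _ => ?_
        congr 1
        rw [Fin.card_Ioi, Fin.card_Iio]
        have hi : (i : ℕ) < K := i.isLt
        rw [Nat.cast_sub (by omega : (i : ℕ) ≤ K - 1), Nat.cast_sub (by omega : 1 ≤ K)]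
        push_cast
        ring
    _ = ((K : ℝ) - 1) * ∑ m, y m := by rw [Finset.mul_sum]

lemma det_E (n : ℕ) (α : ℝ) (y : Fin (2 * n) → ℝ) :
    (Matrix.of fun k m : Fin (2 * n) =>
        Complex.exp (-(Complex.I * (((k : ℕ) : ℂ) - (n : ℂ) + 1) + (α : ℂ)) * (y m : ℂ))).det
      = (∏ i : Fin (2 * n), ∏ _j ∈ Finset.Ioi i, (-2 * Complex.I))
        * ((∏ i : Fin (2 * n), ∏ j ∈ Finset.Ioi i, Real.sin ((y j - y i) / 2) : ℝ) : ℂ)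
        * Complex.exp ((-(α : ℂ) - Complex.I / 2) * ((∑ m, y m : ℝ) : ℂ)) := by
  set z : Fin (2 * n) → ℂ := fun m => Complex.exp (-Complex.I * (y m : ℂ)) with hz
  set d : Fin (2 * n) → ℂ :=
    fun m => Complex.exp ((Complex.I * ((n : ℂ) - 1) - (α : ℂ)) * (y m : ℂ)) with hd
  have hentry : ∀ k m : Fin (2 * n),
      Complex.exp (-(Complex.I * (((k : ℕ) : ℂ) - (n : ℂ) + 1) + (α : ℂ)) * (y m : ℂ))
        = d m * z m ^ (k : ℕ) := by
    intro k m
    rw [hd, hz]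
    rw [← Complex.exp_nat_mul, ← Complex.exp_add]
    congr 1
    ring
  have step1 : (Matrix.of fun k m : Fin (2 * n) =>
      Complex.exp (-(Complex.I * (((k : ℕ) : ℂ) - (n : ℂ) + 1) + (α : ℂ)) * (y m : ℂ))).det
      = (∏ m, d m) * ∏ i : Fin (2 * n), ∏ j ∈ Finset.Ioi i, (z j - z i) := by
    have : (Matrix.of fun k m : Fin (2 * n) =>
        Complex.exp (-(Complex.I * (((k : ℕ) : ℂ) - (n : ℂ) + 1) + (α : ℂ)) * (y m : ℂ)))
        = (Matrix.of fun m k : Fin (2 * n) => d m * (Matrix.vandermonde z) m k).transpose := by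
      ext k m
      simp only [Matrix.of_apply, Matrix.transpose_apply, Matrix.vandermonde]
      rw [hentry k m]
    rw [this, Matrix.det_transpose, Matrix.det_mul_column d, Matrix.det_vandermonde]
  rw [step1]
  have step2 : ∀ i j : Fin (2 * n), z j - z i
      = (-2 * Complex.I) * ((Real.sin ((y j - y i) / 2) : ℝ) : ℂ)
        * Complex.exp (-Complex.I * (((y i + y j) / 2 : ℝ) : ℂ)) := by
    intro i j
    rw [hz]
    have := exp_diff_eq' (y i : ℂ) (y j : ℂ)
    rw [this]
    congr 2
    · rw [Complex.ofReal_sin]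
      congr 1
      push_cast
      ring
    · push_cast
      ring
  have step3 : ∏ i : Fin (2 * n), ∏ j ∈ Finset.Ioi i, (z j - z i)
      = (∏ i : Fin (2 * n), ∏ _j ∈ Finset.Ioi i, (-2 * Complex.I))
        * ((∏ i : Fin (2 * n), ∏ j ∈ Finset.Ioi i, Real.sin ((y j - y i) / 2) : ℝ) : ℂ)
        * Complex.exp (∑ i : Fin (2 * n), ∑ j ∈ Finset.Ioi i,
            (-Complex.I * (((y i + y j) / 2 : ℝ) : ℂ))) := by
    rw [Complex.exp_sum]
    push_cast [Complex.ofReal_prod]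
    rw [← Finset.prod_mul_distrib, ← Finset.prod_mul_distrib]
    refine Finset.prod_congr rfl fun i _ => ?_
    rw [Complex.exp_sum, ← Finset.prod_mul_distrib, ← Finset.prod_mul_distrib]
    refine Finset.prod_congr rfl fun j _ => ?_
    rw [step2 i j]
    push_cast
    ring
  rw [step3]
  have step4 : (∏ m, d m) * Complex.exp (∑ i : Fin (2 * n), ∑ j ∈ Finset.Ioi i,
      (-Complex.I * (((y i + y j) / 2 : ℝ) : ℂ)))
      = Complex.exp ((-(α : ℂ) - Complex.I / 2) * ((∑ m, y m : ℝ) : ℂ)) := by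
    rw [hd, ← Complex.exp_sum, ← Complex.exp_add]
    congr 1
    have hp : ∑ i : Fin (2 * n), ∑ j ∈ Finset.Ioi i, (y i + y j)
        = (((2 * n : ℕ) : ℝ) - 1) * ∑ m, y m := pair_sum (2 * n) y
    have hps : ∑ i : Fin (2 * n), ∑ j ∈ Finset.Ioi i,
        (-Complex.I * (((y i + y j) / 2 : ℝ) : ℂ))
        = (-Complex.I / 2) * ((∑ i : Fin (2 * n), ∑ j ∈ Finset.Ioi i, (y i + y j) : ℝ) : ℂ) := by
      push_cast
      rw [Finset.mul_sum]
      refine Finset.sum_congr rfl fun i _ => ?_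
      rw [Finset.mul_sum]
      refine Finset.sum_congr rfl fun j _ => ?_
      ring
    rw [hps, hp]
    have hsum : ∑ m : Fin (2 * n), (Complex.I * ((n : ℂ) - 1) - (α : ℂ)) * (y m : ℂ)
        = (Complex.I * ((n : ℂ) - 1) - (α : ℂ)) * ((∑ m, y m : ℝ) : ℂ) := by
      push_cast
      rw [Finset.mul_sum]
    rw [hsum]
    push_cast
    ring
  rw [← step4]
  ring

/-- The matrix `A` of Fourier-type moments of the boundary data:
`A_{km} = (1/2π)∫₀^{2π} e^{-(ik+α)x} φ_m(x) dx`, rows `k = −n+1,…,n`. -/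
noncomputable def momentMatrix (n : ℕ) (α : ℝ) (φ : Fin (2 * n) → ℝ → ℝ) :
    Matrix (Fin (2 * n)) (Fin (2 * n)) ℂ :=
  Matrix.of fun k m =>
    (1 / (2 * (π : ℂ))) * ∫ t in (0:ℝ)..(2 * π),
      Complex.exp (-(Complex.I * (((k : ℕ) : ℂ) - (n : ℂ) + 1) + (α : ℂ)) * (t : ℂ)) *
        (φ m t : ℂ)

/-- If `0 = x₁ < … < x_{2n+1} = 2π` and `φ_m ≥ 0` are continuous with
`{φ_m > 0} = (x_m, x_{m+1})`, then the moment matrix `A` is invertible. -/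
theorem momentMatrix_invertible (n : ℕ) (hn : 1 ≤ n) (α : ℝ)
    (x : Fin (2 * n + 1) → ℝ) (hx : StrictMono x)
    (hx0 : x 0 = 0) (hxlast : x (Fin.last (2 * n)) = 2 * π)
    (φ : Fin (2 * n) → ℝ → ℝ)
    (hcont : ∀ m, ContinuousOn (φ m) (Set.Icc 0 (2 * π)))
    (hpos : ∀ m t, 0 ≤ φ m t)
    (hsupp : ∀ m, ∀ t ∈ Set.Icc (0:ℝ) (2 * π),
      (0 < φ m t ↔ t ∈ Set.Ioo (x m.castSucc) (x m.succ))) :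
    (momentMatrix n α φ).det ≠ 0 := by
  haveI : Nonempty (Fin (2 * n)) := ⟨⟨0, by omega⟩⟩
  have h2π : (0:ℝ) ≤ 2 * π := by positivity
  have hxnn : ∀ m : Fin (2 * n + 1), 0 ≤ x m := fun m => hx0 ▸ hx.monotone (Fin.zero_le m)
  have hxle : ∀ m : Fin (2 * n + 1), x m ≤ 2 * π := fun m =>
    hxlast ▸ hx.monotone (Fin.le_last m)
  -- the continuous extension ψ of φ
  set ψ : Fin (2 * n) → ℝ → ℝ :=
    fun m => Set.IccExtend h2π ((Set.Icc (0:ℝ) (2 * π)).restrict (φ m)) with hψdef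
  have hψcont : ∀ m, Continuous (ψ m) := fun m => ((hcont m).restrict).Icc_extend'
  have hψeq : ∀ m, ∀ t ∈ Set.Icc (0:ℝ) (2 * π), ψ m t = φ m t := by
    intro m t ht
    simp only [hψdef]
    rw [Set.IccExtend_of_mem h2π _ ht]
    rfl
  have hψnn : ∀ m t, 0 ≤ ψ m t := by
    intro m t
    simp only [hψdef, Set.IccExtend_apply]
    exact hpos m _
  have hψiff : ∀ m t, 0 < ψ m t ↔ t ∈ Set.Ioo (x m.castSucc) (x m.succ) := by
    intro m t
    by_cases ht1 : t < 0
    · have hproj : Set.projIcc (0:ℝ) (2 * π) h2π t = ⟨0, Set.left_mem_Icc.2 h2π⟩ :=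
        Set.projIcc_of_le_left h2π ht1.le
      have hv : ψ m t = φ m 0 := by
        show ((Set.Icc (0:ℝ) (2 * π)).restrict (φ m)) (Set.projIcc 0 (2 * π) h2π t) = φ m 0
        rw [hproj]
        rfl
      rw [hv]
      constructor
      · intro hp
        have := (hsupp m 0 ⟨le_refl 0, h2π⟩).mp hp
        exact absurd this.1 (not_lt.2 (hxnn m.castSucc))
      · intro hIoo
        exact absurd hIoo.1 (not_lt.2 (ht1.le.trans (hxnn m.castSucc)))
    · by_cases ht2 : 2 * π < t
      · have hproj : Set.projIcc (0:ℝ) (2 * π) h2π t = ⟨2 * π, Set.right_mem_Icc.2 h2π⟩ :=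
          Set.projIcc_of_right_le h2π ht2.le
        have hv : ψ m t = φ m (2 * π) := by
          show ((Set.Icc (0:ℝ) (2 * π)).restrict (φ m)) (Set.projIcc 0 (2 * π) h2π t) = φ m (2 * π)
          rw [hproj]
          rfl
        rw [hv]
        constructor
        · intro hp
          have := (hsupp m (2 * π) ⟨h2π, le_refl _⟩).mp hp
          exact absurd this.2 (not_lt.2 (hxle m.succ))
        · intro hIoo
          exact absurd (lt_trans ht2 hIoo.2) (not_lt.2 (hxle m.succ))
      · have ht : t ∈ Set.Icc (0:ℝ) (2 * π) := ⟨not_lt.1 ht1, not_lt.1 ht2⟩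
        rw [hψeq m t ht]
        exact hsupp m t ht
  have hψ0 : ∀ m t, t ∉ Set.Ioc (0:ℝ) (2 * π) → ψ m t = 0 := by
    intro m t ht
    by_contra h0
    have hp : 0 < ψ m t := lt_of_le_of_ne (hψnn m t) (Ne.symm h0)
    obtain ⟨h1, h2⟩ := (hψiff m t).mp hp
    exact ht ⟨lt_of_le_of_lt (hxnn m.castSucc) h1, le_trans h2.le (hxle m.succ)⟩
  -- the integrand columns
  set f : Fin (2 * n) → Fin (2 * n) → ℝ → ℂ := fun k m t =>
    Complex.exp (-(Complex.I * (((k : ℕ) : ℂ) - (n : ℂ) + 1) + (α : ℂ)) * (t : ℂ)) *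
      (ψ m t : ℂ) with hfdef
  have hfc : ∀ k m, Continuous (f k m) := by
    intro k m
    exact (Complex.continuous_exp.comp (continuous_const.mul Complex.continuous_ofReal)).mul
      (Complex.continuous_ofReal.comp (hψcont m))
  have hfint : ∀ k m, Integrable (f k m) := by
    intro k m
    refine (hfc k m).integrable_of_hasCompactSupport
      (HasCompactSupport.intro (isCompact_Icc (a := (0:ℝ)) (b := 2 * π)) fun t ht => ?_)
    have : ψ m t = 0 := hψ0 m t (fun h => ht (Set.Ioc_subset_Icc_self h))
    simp only [hfdef, this, Complex.ofReal_zero, mul_zero]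
  -- entries as whole-line integrals
  have hA : momentMatrix n α φ
      = (1 / (2 * (π:ℂ))) • Matrix.of (fun k m => ∫ t : ℝ, f k m t) := by
    ext k m
    simp only [momentMatrix, Matrix.smul_apply, Matrix.of_apply, smul_eq_mul]
    congr 1
    rw [intervalIntegral.integral_of_le h2π]
    calc (∫ t in Set.Ioc (0:ℝ) (2 * π),
            Complex.exp (-(Complex.I * (((k : ℕ) : ℂ) - (n : ℂ) + 1) + (α : ℂ)) * (t : ℂ)) *
              (φ m t : ℂ))
        = ∫ t in Set.Ioc (0:ℝ) (2 * π), f k m t := by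
          refine setIntegral_congr_fun measurableSet_Ioc fun t ht => ?_
          simp only [hfdef]
          rw [hψeq m t (Set.Ioc_subset_Icc_self ht)]
      _ = ∫ t : ℝ, f k m t := by
          refine setIntegral_eq_integral_of_forall_compl_eq_zero fun t ht => ?_
          simp only [hfdef, hψ0 m t ht, Complex.ofReal_zero, mul_zero]
  have hdet1 : (momentMatrix n α φ).det
      = (1 / (2 * (π:ℂ)))^(2*n) * (Matrix.of fun k m : Fin (2*n) => ∫ t : ℝ, f k m t).det := by
    rw [hA, Matrix.det_smul, Fintype.card_fin]
  have hBdet : (Matrix.of fun k m : Fin (2*n) => ∫ t : ℝ, f k m t).det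
      = ∫ y : Fin (2*n) → ℝ, ((∏ m, (ψ m (y m) : ℂ)) *
          (Matrix.of fun k m : Fin (2*n) =>
            Complex.exp (-(Complex.I * (((k:ℕ):ℂ) - (n:ℂ) + 1) + (α:ℂ)) * ((y m : ℝ):ℂ))).det) := by
    rw [Matrix.det_apply']
    calc (∑ σ : Equiv.Perm (Fin (2 * n)), ((Equiv.Perm.sign σ : ℤ) : ℂ) *
            ∏ m, (Matrix.of fun k m' : Fin (2*n) => ∫ t : ℝ, f k m' t) (σ m) m)
        = ∑ σ : Equiv.Perm (Fin (2*n)), ∫ y : Fin (2*n) → ℝ,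
            ((Equiv.Perm.sign σ : ℤ) : ℂ) * ∏ m, f (σ m) m (y m) := by
          refine Finset.sum_congr rfl fun σ _ => ?_
          rw [integral_const_mul]
          congr 1
          simp only [Matrix.of_apply]
          rw [← MeasureTheory.integral_fintype_prod_eq_prod
            (fun m t => f (σ m) m t)]
          rfl
      _ = ∫ y : Fin (2*n) → ℝ, ∑ σ : Equiv.Perm (Fin (2*n)),
            ((Equiv.Perm.sign σ : ℤ) : ℂ) * ∏ m, f (σ m) m (y m) := by
          refine (integral_finset_sum Finset.univ fun σ _ => ?_).symm
          exact (Integrable.fintype_prod (f := fun m t => f (σ m) m t)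
            (fun m => hfint (σ m) m)).const_mul _
      _ = _ := by
          refine integral_congr_ae (Filter.Eventually.of_forall fun y => ?_)
          dsimp only
          rw [Matrix.det_apply', Finset.mul_sum]
          refine Finset.sum_congr rfl fun σ _ => ?_
          simp only [Matrix.of_apply, hfdef]
          rw [Finset.prod_mul_distrib]
          ring
  -- abbreviations
  set S : (Fin (2*n) → ℝ) → ℝ := fun y => ∑ m, y m with hSdef
  set β : ℝ := (∑ m : Fin (2*n), x m.castSucc) / 2 with hβdef
  set P : (Fin (2*n) → ℝ) → ℝ :=
    fun y => ∏ i, ∏ j ∈ Finset.Ioi i, Real.sin ((y j - y i)/2) with hPdef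
  set G : (Fin (2*n) → ℝ) → ℝ :=
    fun y => (∏ m, ψ m (y m)) * P y * Real.exp (-(α * S y)) with hGdef
  have hBdet2 : (Matrix.of fun k m : Fin (2*n) => ∫ t : ℝ, f k m t).det
      = (∏ i : Fin (2*n), ∏ _j ∈ Finset.Ioi i, (-2 * Complex.I)) *
          ∫ y : Fin (2*n) → ℝ, (∏ m, (ψ m (y m):ℂ))
            * ((P y : ℝ):ℂ)
            * Complex.exp ((-(α:ℂ) - Complex.I/2) * ((S y : ℝ):ℂ)) := by
    rw [hBdet, ← integral_const_mul]
    refine integral_congr_ae (Filter.Eventually.of_forall fun y => ?_)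
    dsimp only
    rw [det_E n α y]
    ring
  -- positivity facts
  have hbox : ∀ y : Fin (2*n) → ℝ, (∀ m, y m ∈ Set.Ioo (x m.castSucc) (x m.succ)) →
      (0 < ∏ m, ψ m (y m)) ∧ (0 < P y) ∧ (0 < Real.sin (S y / 2 - β)) := by
    intro y hy
    refine ⟨Finset.prod_pos fun m _ => (hψiff m (y m)).mpr (hy m), ?_, ?_⟩
    · refine Finset.prod_pos fun i _ => Finset.prod_pos fun j hj => ?_
      have hij : i < j := Finset.mem_Ioi.mp hj
      have hstep : x i.succ ≤ x j.castSucc := by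
        refine hx.monotone ?_
        rw [Fin.le_def]
        simp only [Fin.val_succ, Fin.coe_castSucc]
        exact hij
      have h1 : y i < y j := lt_of_lt_of_le (hy i).2 (le_trans hstep (hy j).1.le)
      have h2 : y j - y i < 2 * π := by
        have ha := hxle j.succ
        have hb := hxnn i.castSucc
        have hc := (hy j).2
        have hd := (hy i).1
        linarith
      exact Real.sin_pos_of_pos_of_lt_pi (by linarith) (by linarith [Real.pi_pos])
    · have hlow : ∑ m : Fin (2*n), x m.castSucc < S y :=
        Finset.sum_lt_sum_of_nonempty Finset.univ_nonempty fun m _ => (hy m).1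
      have hupp : S y < ∑ m : Fin (2*n), x m.succ :=
        Finset.sum_lt_sum_of_nonempty Finset.univ_nonempty fun m _ => (hy m).2
      have htel : ∑ m : Fin (2*n), x m.succ = (∑ m : Fin (2*n), x m.castSucc) + 2 * π := by
        have h' : ∑ m : Fin (2*n), (x m.succ - x m.castSucc) = 2 * π := by
          rw [telescope_sum, hxlast, hx0]
          ring
        rw [Finset.sum_sub_distrib] at h'
        linarith
      refine Real.sin_pos_of_pos_of_lt_pi (by rw [hβdef]; linarith) ?_
      rw [hβdef]
      rw [htel] at hupp
      linarith [Real.pi_pos]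
  have hΨ0 : ∀ y : Fin (2*n) → ℝ, ¬ (∀ m, y m ∈ Set.Ioo (x m.castSucc) (x m.succ)) →
      (∏ m, ψ m (y m)) = 0 := by
    intro y hy
    push_neg at hy
    obtain ⟨m, hm⟩ := hy
    refine Finset.prod_eq_zero (Finset.mem_univ m) ?_
    exact le_antisymm (not_lt.mp fun c => hm ((hψiff m (y m)).mp c)) (hψnn m (y m))
  have hGzero : ∀ y : Fin (2*n) → ℝ,
      y ∉ (Set.univ.pi fun m : Fin (2*n) => Set.Icc (x m.castSucc) (x m.succ)) → G y = 0 := by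
    intro y hy
    have : ¬ ∀ m, y m ∈ Set.Ioo (x m.castSucc) (x m.succ) := by
      intro hall
      exact hy (Set.mem_univ_pi.mpr fun m => Set.Ioo_subset_Icc_self (hall m))
    have hq : G y = (∏ m, ψ m (y m)) * P y * Real.exp (-(α * S y)) := by rw [hGdef]
    rw [hq, hΨ0 y this, zero_mul, zero_mul]
  -- continuity
  have hΨcont : Continuous fun y : Fin (2*n) → ℝ => ∏ m, ψ m (y m) :=
    continuous_finset_prod _ fun m _ => (hψcont m).comp (continuous_apply m)
  have hPcont : Continuous P := by
    rw [hPdef]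
    exact continuous_finset_prod _ fun i _ => continuous_finset_prod _ fun j _ =>
      Real.continuous_sin.comp (((continuous_apply j).sub (continuous_apply i)).div_const 2)
  have hScont : Continuous S := by
    rw [hSdef]
    exact continuous_finset_sum _ fun m _ => continuous_apply m
  have hGcont : Continuous G := by
    rw [hGdef]
    exact (hΨcont.mul hPcont).mul (Real.continuous_exp.comp (continuous_const.mul hScont).neg)
  have hKcompact : IsCompact (Set.univ.pi fun m : Fin (2*n) => Set.Icc (x m.castSucc) (x m.succ)) :=
    isCompact_univ_pi fun m => isCompact_Icc
  -- the positive integral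
  have hhcont : Continuous (fun y => G y * Real.sin (S y / 2 - β)) :=
    hGcont.mul (Real.continuous_sin.comp ((hScont.div_const 2).sub continuous_const))
  have hhint : Integrable (fun y => G y * Real.sin (S y / 2 - β)) := by
    refine hhcont.integrable_of_hasCompactSupport
      (HasCompactSupport.intro hKcompact fun y hy => ?_)
    rw [hGzero y hy, zero_mul]
  have hGpos : ∀ y : Fin (2*n) → ℝ, (∀ m, y m ∈ Set.Ioo (x m.castSucc) (x m.succ)) →
      0 < G y := by
    intro y hy
    obtain ⟨h1, h2, h3⟩ := hbox y hy
    have : G y = (∏ m, ψ m (y m)) * P y * Real.exp (-(α * S y)) := by rw [hGdef]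
    rw [this]
    exact mul_pos (mul_pos h1 h2) (Real.exp_pos _)
  have hhnn : (0 : (Fin (2*n) → ℝ) → ℝ) ≤ fun y => G y * Real.sin (S y / 2 - β) := by
    intro y
    by_cases hy : ∀ m, y m ∈ Set.Ioo (x m.castSucc) (x m.succ)
    · exact (mul_pos (hGpos y hy) (hbox y hy).2.2).le
    · have : G y = 0 := by
        have hq : G y = (∏ m, ψ m (y m)) * P y * Real.exp (-(α * S y)) := by rw [hGdef]
        rw [hq, hΨ0 y hy, zero_mul, zero_mul]
      simp only [Pi.zero_apply, this, zero_mul]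
      exact le_refl 0
  have hIpos : 0 < ∫ y : Fin (2*n) → ℝ, G y * Real.sin (S y / 2 - β) := by
    refine (integral_pos_iff_support_of_nonneg hhnn hhint).mpr ?_
    have hsub : (Set.univ.pi fun m : Fin (2*n) => Set.Ioo (x m.castSucc) (x m.succ))
        ⊆ Function.support (fun y => G y * Real.sin (S y / 2 - β)) := by
      intro y hy
      have hy' : ∀ m, y m ∈ Set.Ioo (x m.castSucc) (x m.succ) :=
        fun m => (Set.mem_univ_pi.mp hy) m
      exact (mul_pos (hGpos y hy') (hbox y hy').2.2).ne'
    refine lt_of_lt_of_le ?_ (measure_mono hsub)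
    refine (isOpen_set_pi Set.finite_univ fun m _ => isOpen_Ioo).measure_pos volume ?_
    refine ⟨fun m => (x m.castSucc + x m.succ) / 2, Set.mem_univ_pi.mpr fun m => ?_⟩
    have := hx (show m.castSucc < m.succ from Fin.castSucc_lt_succ)
    constructor <;> [linarith; linarith]
  -- the complex integral J
  set J : ℂ := ∫ y : Fin (2*n) → ℝ,
    ((G y : ℝ):ℂ) * Complex.exp (((β - S y/2 : ℝ):ℂ) * Complex.I) with hJdef
  have hJint : Integrable (fun y : Fin (2*n) → ℝ =>
      ((G y : ℝ):ℂ) * Complex.exp (((β - S y/2 : ℝ):ℂ) * Complex.I)) := by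
    refine Continuous.integrable_of_hasCompactSupport ?_
      (HasCompactSupport.intro hKcompact fun y hy => ?_)
    · exact (Complex.continuous_ofReal.comp hGcont).mul (Complex.continuous_exp.comp
        ((Complex.continuous_ofReal.comp (continuous_const.sub (hScont.div_const 2))).mul
          continuous_const))
    · rw [hGzero y hy]
      simp
  have him : J.im = ∫ y : Fin (2*n) → ℝ, G y * Real.sin (β - S y / 2) := by
    have h1 := integral_im hJint
    simp only [RCLike.im_eq_complex_im] at h1
    rw [hJdef, ← h1]
    refine integral_congr_ae (Filter.Eventually.of_forall fun y => ?_)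
    dsimp only
    simp only [Complex.mul_im, Complex.exp_ofReal_mul_I_re, Complex.exp_ofReal_mul_I_im,
      Complex.ofReal_re, Complex.ofReal_im, zero_mul, add_zero]
  have hJim : J.im = -∫ y : Fin (2*n) → ℝ, G y * Real.sin (S y / 2 - β) := by
    rw [him, ← integral_neg]
    refine integral_congr_ae (Filter.Eventually.of_forall fun y => ?_)
    dsimp only
    rw [show β - S y/2 = -(S y/2 - β) by ring, Real.sin_neg]
    ring
  have hJne : J ≠ 0 := by
    intro h0
    rw [h0] at hJim
    simp only [Complex.zero_im] at hJim
    linarith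
  -- splitting off the constant phase
  have hsplit : (∫ y : Fin (2*n) → ℝ, (∏ m, (ψ m (y m):ℂ))
        * ((P y : ℝ):ℂ)
        * Complex.exp ((-(α:ℂ) - Complex.I/2) * ((S y : ℝ):ℂ)))
      = Complex.exp (-(β:ℂ) * Complex.I) * J := by
    rw [hJdef, ← integral_const_mul]
    refine integral_congr_ae (Filter.Eventually.of_forall fun y => ?_)
    dsimp only
    have hexp : Complex.exp ((-(α:ℂ) - Complex.I/2) * ((S y:ℝ):ℂ))
        = Complex.exp (-(β:ℂ) * Complex.I) * Complex.exp (((-(α * S y) : ℝ):ℂ))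
            * Complex.exp (((β - S y/2 : ℝ):ℂ) * Complex.I) := by
      rw [← Complex.exp_add, ← Complex.exp_add]
      congr 1
      push_cast
      ring
    rw [hexp]
    have hq : G y = (∏ m, ψ m (y m)) * P y * Real.exp (-(α * S y)) := by rw [hGdef]
    rw [hq]
    push_cast [Complex.ofReal_exp]
    ring
  -- conclusion
  rw [hdet1, hBdet2, hsplit]
  refine mul_ne_zero (pow_ne_zero _ ?_) (mul_ne_zero ?_ (mul_ne_zero (Complex.exp_ne_zero _) hJne))
  · refine one_div_ne_zero (mul_ne_zero two_ne_zero ?_)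
    exact_mod_cast Real.pi_ne_zero
  · refine Finset.prod_ne_zero_iff.mpr fun i _ => Finset.prod_ne_zero_iff.mpr fun j _ => ?_
    exact mul_ne_zero (by norm_num) Complex.I_ne_zero
end

section
/- With X_k the H¹ solution of X'' = [(k−iα)² + λe^{-2y}]X, X(0)=1 (where ν = sign(k)(k−iα), λ = ωα − μ + iωk, Θ_ν(λ) ≠ 0), there exists C ≠ 0 such that X_k(y) = C e^{-sign(k)(k−iα)y} + O(e^{-(|k|+2)y}) as y → +∞. -/
open Complex Asymptotics Filter

/-- `Θ_ν(z) = Σ_{n≥0} (1/(n! Γ(n+1+ν))) (z/4)^n`. -/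
noncomputable def Theta (ν z : ℂ) : ℂ :=
  ∑' n : ℕ, (1 / ((n.factorial : ℂ) * Complex.Gamma ((n : ℂ) + 1 + ν))) * (z / 4) ^ n


lemma summable_theta (ν : ℂ) (r : ℝ) (hr : 0 ≤ r) :
    Summable (fun n : ℕ =>
      ‖(1 / ((n.factorial : ℂ) * Complex.Gamma ((n : ℂ) + 1 + ν)))‖ * r ^ n) := by
  obtain ⟨N, hN⟩ := exists_nat_ge ‖ν‖
  have step : ∀ m : ℕ, N ≤ m →
      ‖(1:ℂ) / Complex.Gamma ((m:ℂ) + 1 + 1 + ν)‖ ≤ ‖(1:ℂ) / Complex.Gamma ((m:ℂ) + 1 + ν)‖ := by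
    intro m hm
    have h1 : (1:ℝ) ≤ ‖(m:ℂ) + 1 + ν‖ := by
      have h2 := norm_sub_le ((m:ℂ) + 1 + ν) ν
      simp only [add_sub_cancel_right] at h2
      have hm1 : ‖(m:ℂ) + 1‖ = (m:ℝ) + 1 := by
        have : ((m:ℂ) + 1) = ((m + 1 : ℕ) : ℂ) := by push_cast; ring
        rw [this, Complex.norm_natCast]; push_cast; ring
      have hmN : (N : ℝ) ≤ (m : ℝ) := Nat.cast_le.mpr hm
      rw [hm1] at h2
      linarith
    have hs : ((m:ℂ) + 1 + ν) ≠ 0 := by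
      intro h; rw [h] at h1; simp at h1; linarith
    have hG := Complex.Gamma_add_one ((m:ℂ) + 1 + ν) hs
    have heq : (m:ℂ) + 1 + 1 + ν = ((m:ℂ) + 1 + ν) + 1 := by ring
    rw [heq, hG]
    rw [one_div, one_div, mul_inv, norm_mul, norm_inv]
    have h0 : (0:ℝ) ≤ ‖(Complex.Gamma ((m:ℂ) + 1 + ν))⁻¹‖ := norm_nonneg _
    calc ‖(m:ℂ)+1+ν‖⁻¹ * ‖(Complex.Gamma ((m:ℂ)+1+ν))⁻¹‖
        ≤ 1 * ‖(Complex.Gamma ((m:ℂ)+1+ν))⁻¹‖ :=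
          mul_le_mul_of_nonneg_right (inv_le_one_of_one_le₀ h1) h0
      _ = ‖(Complex.Gamma ((m:ℂ)+1+ν))⁻¹‖ := one_mul _
  have bound : ∀ n : ℕ,
      ‖(1:ℂ) / Complex.Gamma (((n + N : ℕ):ℂ) + 1 + ν)‖ ≤
      ‖(1:ℂ) / Complex.Gamma ((N:ℂ) + 1 + ν)‖ := by
    intro n
    induction n with
    | zero => simp
    | succ n ih =>
      refine le_trans ?_ ih
      have h3 : (((n + 1 + N : ℕ)):ℂ) + 1 + ν = ((n + N : ℕ):ℂ) + 1 + 1 + ν := by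
        push_cast; ring
      rw [h3]
      have := step (n + N) (by omega)
      push_cast at this ⊢
      exact this
  rw [← summable_nat_add_iff N]
  have hsum : Summable (fun n : ℕ =>
      ‖(1:ℂ) / Complex.Gamma ((N:ℂ) + 1 + ν)‖ * (r ^ (n + N) / ((n + N).factorial))) := by
    have h0 : Summable (fun n : ℕ => r ^ n / (n.factorial : ℝ)) :=
      Real.summable_pow_div_factorial r
    exact ((summable_nat_add_iff N).mpr h0).mul_left _
  apply Summable.of_nonneg_of_le (fun n => by positivity) _ hsum
  intro n
  have hfac : ‖(1 / (((n+N).factorial : ℂ) * Complex.Gamma (((n+N:ℕ):ℂ) + 1 + ν)))‖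
      = ‖(1:ℂ) / Complex.Gamma (((n+N:ℕ):ℂ) + 1 + ν)‖ / ((n+N).factorial : ℝ) := by
    rw [one_div, mul_inv, norm_mul, norm_inv, one_div, Complex.norm_natCast]
    ring
  rw [hfac]
  calc ‖(1:ℂ) / Complex.Gamma (((n+N:ℕ):ℂ) + 1 + ν)‖ / ((n+N).factorial : ℝ) * r ^ (n+N)
      = (r ^ (n+N) / ((n+N).factorial : ℝ)) * ‖(1:ℂ) / Complex.Gamma (((n+N:ℕ):ℂ) + 1 + ν)‖ := by
        ring
    _ ≤ (r ^ (n+N) / ((n+N).factorial : ℝ)) * ‖(1:ℂ) / Complex.Gamma ((N:ℂ) + 1 + ν)‖ :=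
        mul_le_mul_of_nonneg_left (bound n) (by positivity)
    _ = ‖(1:ℂ) / Complex.Gamma ((N:ℂ) + 1 + ν)‖ * (r ^ (n + N) / ((n + N).factorial)) := by
        ring

lemma summable_theta_c (ν z : ℂ) :
    Summable (fun n : ℕ => (1 / ((n.factorial : ℂ) * Complex.Gamma ((n : ℂ) + 1 + ν))) * (z / 4) ^ n) := by
  apply Summable.of_norm
  have h := summable_theta ν (‖z‖ / 4) (by positivity)
  apply h.congr
  intro n
  rw [norm_mul, norm_pow, norm_div]
  norm_num


lemma theta_zero (ν : ℂ) : Theta ν 0 = 1 / Complex.Gamma (1 + ν) := by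
  unfold Theta
  rw [tsum_eq_single 0 (fun n hn => by simp [zero_pow hn])]
  simp


lemma theta_diff (ν : ℂ) (R : ℝ) (hR : 0 ≤ R) :
    ∃ M : ℝ, ∀ z : ℂ, ‖z‖ ≤ R → ‖Theta ν z - Theta ν 0‖ ≤ M * ‖z‖ := by
  set a : ℕ → ℂ := fun n => 1 / ((n.factorial : ℂ) * Complex.Gamma ((n : ℂ) + 1 + ν)) with ha
  refine ⟨(∑' n : ℕ, ‖a (n+1)‖ * ((R+1)/4) ^ (n+1)) / (R+1), ?_⟩
  intro z hz
  have hsz : Summable (fun n : ℕ => a n * (z / 4) ^ n) := summable_theta_c ν z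
  have hth : Theta ν z = a 0 * (z/4)^0 + ∑' n : ℕ, a (n+1) * (z/4)^(n+1) := by
    unfold Theta
    rw [hsz.tsum_eq_zero_add]
  have hz0 : Theta ν 0 = a 0 := by
    rw [theta_zero]; simp [ha]
  rw [hth, hz0, pow_zero, mul_one, add_sub_cancel_left]
  have hsn : Summable (fun n : ℕ => ‖a (n+1) * (z/4)^(n+1)‖) := by
    have h := summable_theta ν (‖z‖ / 4) (by positivity)
    have h2 := (summable_nat_add_iff 1).mpr h
    apply h2.congr
    intro n
    rw [norm_mul, norm_pow, norm_div]
    norm_num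
  have hsg : Summable (fun n : ℕ => (‖a (n+1)‖ * ((R+1)/4) ^ (n+1)) * (‖z‖/(R+1))) := by
    have h := summable_theta ν ((R+1)/4) (by positivity)
    exact ((summable_nat_add_iff 1).mpr h).mul_right _
  calc ‖∑' n : ℕ, a (n+1) * (z/4)^(n+1)‖
      ≤ ∑' n : ℕ, ‖a (n+1) * (z/4)^(n+1)‖ := norm_tsum_le_tsum_norm hsn
    _ ≤ ∑' n : ℕ, (‖a (n+1)‖ * ((R+1)/4) ^ (n+1)) * (‖z‖/(R+1)) := by
        apply Summable.tsum_le_tsum _ hsn hsg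
        intro n
        have hzn : ‖a (n+1) * (z/4)^(n+1)‖ = ‖a (n+1)‖ * (‖z‖/4)^(n+1) := by
          rw [norm_mul, norm_pow, norm_div]
          norm_num
        rw [hzn]
        have hzR : ‖z‖/4 ≤ (R+1)/4 := by linarith
        have hp : (‖z‖/4)^n ≤ ((R+1)/4)^n := pow_le_pow_left₀ (by positivity) hzR n
        have hR1 : (0:ℝ) < R + 1 := by linarith
        have key : (‖z‖/4)^n * (‖z‖/4) ≤ ((R+1)/4)^n * ((R+1)/4) * (‖z‖/(R+1)) := by
          rw [mul_comm (((R+1)/4)^n) ((R+1)/4), mul_assoc]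
          have : ((R+1)/4) * (((R+1)/4)^n * (‖z‖/(R+1))) = ((R+1)/4)^n * (‖z‖/4) := by
            field_simp
          rw [this]
          exact mul_le_mul_of_nonneg_right hp (by positivity)
        calc ‖a (n+1)‖ * (‖z‖/4)^(n+1)
            = ‖a (n+1)‖ * ((‖z‖/4)^n * (‖z‖/4)) := by rw [pow_succ]
          _ ≤ ‖a (n+1)‖ * (((R+1)/4)^n * ((R+1)/4) * (‖z‖/(R+1))) :=
              mul_le_mul_of_nonneg_left key (norm_nonneg _)
          _ = ‖a (n+1)‖ * ((R+1)/4) ^ (n+1) * (‖z‖/(R+1)) := by rw [pow_succ]; ring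
    _ = (∑' n : ℕ, ‖a (n+1)‖ * ((R+1)/4) ^ (n+1)) * (‖z‖/(R+1)) := tsum_mul_right
    _ = (∑' n : ℕ, ‖a (n+1)‖ * ((R+1)/4) ^ (n+1)) / (R+1) * ‖z‖ := by ring

/-- With `ν = sign(k)(k−iα)`, `λ = ωα−μ+iωk`, `Θ_ν(λ) ≠ 0` and
`X_k(y) = Θ_ν(λe^{-2y})e^{-νy}/Θ_ν(λ)`, there exists `C ≠ 0` such that
`X_k(y) = C e^{-sign(k)(k−iα)y} + O(e^{-(|k|+2)y})` as `y → +∞`. -/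
theorem bvp_solution_asymptotics (k : ℤ) (hk : k ≠ 0) (α ω μ : ℝ)
    (hres : Theta ((Int.sign k : ℂ) * ((k : ℂ) - (α : ℂ) * Complex.I))
      (((ω * α - μ : ℝ) : ℂ) + Complex.I * ((ω : ℂ) * (k : ℂ))) ≠ 0) :
    ∃ C : ℂ, C ≠ 0 ∧
      (fun y : ℝ =>
          Theta ((Int.sign k : ℂ) * ((k : ℂ) - (α : ℂ) * Complex.I))
              ((((ω * α - μ : ℝ) : ℂ) + Complex.I * ((ω : ℂ) * (k : ℂ))) *
                Complex.exp (-2 * (y : ℂ))) *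
            Complex.exp (-((Int.sign k : ℂ) * ((k : ℂ) - (α : ℂ) * Complex.I)) * (y : ℂ)) /
            Theta ((Int.sign k : ℂ) * ((k : ℂ) - (α : ℂ) * Complex.I))
              (((ω * α - μ : ℝ) : ℂ) + Complex.I * ((ω : ℂ) * (k : ℂ)))
          - C * Complex.exp (-((Int.sign k : ℂ) * ((k : ℂ) - (α : ℂ) * Complex.I)) * (y : ℂ)))
        =O[atTop] fun y : ℝ => Real.exp (-((|k| : ℝ) + 2) * y) := by
  set ν : ℂ := (Int.sign k : ℂ) * ((k : ℂ) - (α : ℂ) * Complex.I) with hν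
  set lam : ℂ := (((ω * α - μ : ℝ) : ℂ) + Complex.I * ((ω : ℂ) * (k : ℂ))) with hlam
  -- sign * k = |k|
  have hsk : (Int.sign k) * k = |k| := by
    rcases lt_trichotomy k 0 with h | h | h
    · rw [Int.sign_eq_neg_one_of_neg h, abs_of_neg h]; ring
    · exact absurd h hk
    · rw [Int.sign_eq_one_of_pos h, abs_of_pos h]; ring
  have habs1 : (1:ℤ) ≤ |k| := by
    rcases lt_trichotomy k 0 with h | h | h
    · rw [abs_of_neg h]; omega
    · exact absurd h hk
    · rw [abs_of_pos h]; omega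
  -- ν real/imag parts
  have hre : ν.re = ((|k|:ℤ):ℝ) := by
    have h2 : ν.re = (Int.sign k : ℝ) * (k:ℝ) := by
      rw [hν]; simp [Complex.mul_re]
    rw [h2]
    exact_mod_cast hsk
  -- Gamma (1+ν) ≠ 0
  have hGamma : Complex.Gamma (1 + ν) ≠ 0 := by
    apply Complex.Gamma_ne_zero
    intro m hm
    have hre' := congrArg Complex.re hm
    simp [Complex.add_re, hre] at hre'
    have h1k : (1:ℝ) ≤ |(k:ℝ)| := by
      have := habs1
      have h2 : ((1:ℤ):ℝ) ≤ ((|k|:ℤ):ℝ) := Int.cast_le.mpr habs1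
      push_cast at h2
      exact h2
    have hm0 : (0:ℝ) ≤ (m:ℝ) := Nat.cast_nonneg m
    push_cast at hre'
    linarith
  have hTh0 : Theta ν 0 ≠ 0 := by
    rw [theta_zero]
    exact one_div_ne_zero hGamma
  refine ⟨Theta ν 0 / Theta ν lam, div_ne_zero hTh0 hres, ?_⟩
  obtain ⟨M, hM⟩ := theta_diff ν ‖lam‖ (norm_nonneg _)
  rw [isBigO_iff]
  refine ⟨M * ‖lam‖ / ‖Theta ν lam‖, ?_⟩
  filter_upwards [eventually_ge_atTop (0:ℝ)] with y hy
  have hnorm2 : ‖Complex.exp (-2 * (y:ℂ))‖ = Real.exp (-2 * y) := by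
    rw [Complex.norm_exp]
    congr 1
    simp
  have hle1 : Real.exp (-2 * y) ≤ 1 := by
    rw [Real.exp_le_one_iff]; linarith
  have hnormz : ‖lam * Complex.exp (-2 * (y:ℂ))‖ = ‖lam‖ * Real.exp (-2*y) := by
    rw [norm_mul, hnorm2]
  have hzle : ‖lam * Complex.exp (-2 * (y:ℂ))‖ ≤ ‖lam‖ := by
    rw [hnormz]
    nlinarith [norm_nonneg lam, Real.exp_pos (-2*y)]
  have hE : ‖Complex.exp (-ν * (y:ℂ))‖ = Real.exp (-((|k|:ℤ):ℝ) * y) := by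
    rw [Complex.norm_exp]
    congr 1
    have : (-ν * (y:ℂ)).re = -ν.re * y := by simp [Complex.mul_re]
    rw [this, hre]
  have key : Theta ν (lam * Complex.exp (-2 * (y:ℂ))) * Complex.exp (-ν * (y:ℂ)) / Theta ν lam
      - (Theta ν 0 / Theta ν lam) * Complex.exp (-ν * (y:ℂ))
      = (Theta ν (lam * Complex.exp (-2 * (y:ℂ))) - Theta ν 0) * Complex.exp (-ν * (y:ℂ)) / Theta ν lam := by
    field_simp
  rw [key]
  rw [norm_div, norm_mul]
  have hb := hM _ hzle
  rw [hnormz] at hb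
  have hpos : 0 < ‖Theta ν lam‖ := norm_pos_iff.mpr hres
  rw [hE]
  have hrhs : ‖Real.exp (-((|k|:ℝ) + 2) * y)‖ = Real.exp (-2*y) * Real.exp (-((|k|:ℤ):ℝ) * y) := by
    rw [Real.norm_eq_abs, abs_of_pos (Real.exp_pos _), ← Real.exp_add]
    congr 1
    push_cast
    ring
  rw [hrhs, div_mul_eq_mul_div]
  gcongr ?_ / _
  calc ‖Theta ν (lam * Complex.exp (-2 * (y:ℂ))) - Theta ν 0‖ * Real.exp (-((|k|:ℤ):ℝ) * y)
      ≤ (M * (‖lam‖ * Real.exp (-2*y))) * Real.exp (-((|k|:ℤ):ℝ) * y) :=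
        mul_le_mul_of_nonneg_right hb (le_of_lt (Real.exp_pos _))
    _ = M * ‖lam‖ * (Real.exp (-2*y) * Real.exp (-((|k|:ℤ):ℝ) * y)) := by ring
end
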